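/- arXiv:2505.23194 — 4 statements merged into one kernel-verified Lean document; each statement's English description precedes it below -/
import Mathlib

section
/- Let $a, b, x, y \in \mathbb{R}$ (representing $\gamma[A_0], \gamma[B_0], \gamma[\eta_A], \gamma[\eta_B]$ respectively). If the system $\max(b, y) + x + 1 = 0$, $\max(a, x) + y + 1 = 0$, and $\max(a, x) + \max(b, y) + 1 = 0$ holds, then $x + y = -1$, $a \le x$, and $b \le y$. -/
/-- Reduction of LoRA stability/efficiency conditions (Adam) to the solution set. -/
theorem lora_adam_solution_set
    (a b x y : ℝ)
    (h1 : max b y + x + 1 = 0)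
    (h2 : max a x + y + 1 = 0)
    (h3 : max a x + max b y + 1 = 0) :
    x + y = -1 ∧ a ≤ x ∧ b ≤ y := by
  have hx : max a x = x := by linarith
  have hy : max b y = y := by linarith
  refine ⟨by linarith, ?_, ?_⟩
  · have := le_max_left a x; linarith
  · have := le_max_left b y; linarith
end

section
/- Let $a, b, x, y \in \mathbb{R}$ satisfy $\max(b, y) + x + 1 = 0$, $\max(a, x) + y + 1 = 0$, $\max(a, x) + \max(b, y) + 1 = 0$, together with the uniform learning rate constraint $x = y$. Then $x = y = -1/2$, $a \le -1/2$, and $b \le -1/2$. -/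
/-- Under a uniform learning rate, stable and efficient LoRA fine-tuning with Adam
forces `γ[η] = -1/2` and initialization exponents at most `-1/2`. -/
theorem lora_adam_uniform_lr_solution
    (a b x y : ℝ)
    (h1 : max b y + x + 1 = 0)
    (h2 : max a x + y + 1 = 0)
    (h3 : max a x + max b y + 1 = 0)
    (hxy : x = y) :
    x = -1/2 ∧ y = -1/2 ∧ a ≤ -1/2 ∧ b ≤ -1/2 := by
  have hax : max a x = x := by linarith
  have hby : max b y = y := by linarith
  have ha : a ≤ x := by rw [← hax]; exact le_max_left _ _
  have hb : b ≤ y := by rw [← hby]; exact le_max_left _ _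
  refine ⟨by linarith, by linarith, by linarith, by linarith⟩
end

section
/- With zero initialization of $A$ (i.e., $\gamma[A_0] = -\infty$) and $\gamma[B_0] = 0$, there is no choice of a uniform learning rate exponent $x = \gamma[\eta_A] = \gamma[\eta_B]$ satisfying all three conditions $\max(\gamma[B_0], x) + x + 1 = 0$, $\max(\gamma[A_0], x) + x + 1 = 0$, and $\max(\gamma[A_0], x) + \max(\gamma[B_0], x) + 1 = 0$ simultaneously. -/
/-- Init[B] (`γ[A₀] = -∞`, `γ[B₀] = 0`) admits no uniform learning-rate exponent
achieving both stability and efficiency. -/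
theorem init_B_not_stable_efficient :
    ¬ ∃ x : ℝ,
      max (0 : EReal) (x : EReal) + (x : EReal) + 1 = 0 ∧
      max (⊥ : EReal) (x : EReal) + (x : EReal) + 1 = 0 ∧
      max (⊥ : EReal) (x : EReal) + max (0 : EReal) (x : EReal) + 1 = 0 := by
  rintro ⟨x, h1, h2, h3⟩
  rw [max_eq_right bot_le] at h2 h3
  have hx : x + x + 1 = 0 := by
    exact_mod_cast (by push_cast at h2 ⊢; exact h2 : ((x + x + 1 : ℝ) : EReal) = ((0:ℝ) : EReal))
  have hx' : x = -1/2 := by linarith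
  subst hx'
  rw [show max (0 : EReal) ((-1/2 : ℝ) : EReal) = ((0:ℝ) : EReal) by
    exact max_eq_left (by exact_mod_cast (by norm_num : (-1/2 : ℝ) ≤ 0))] at h3
  have : ((-1/2 : ℝ) : EReal) + ((0:ℝ) : EReal) + 1 = (((-1/2 : ℝ) + 0 + 1 : ℝ) : EReal) := by
    push_cast; ring
  rw [this] at h3
  have : (-1/2 + 0 + 1 : ℝ) = 0 := by exact_mod_cast h3
  linarith
end

section
/- Consider the internal-stability-augmented system: $\max(b, y) + x + 1 = 0$, $\max(a, x) + y + 1 = 0$, $\max(a, x) + \max(b, y) + 1 = 0$, and $\max(a, x) + 1 = 0$, for $a, b \in \mathbb{R} \cup \{-\infty\}$, $x, y \in \mathbb{R}$. Then the solution set is exactly $\{x = -1, y = 0, a \le -1, b \le 0\}$ (with $a, b$ not both $-\infty$ being the nondegeneracy side-condition). -/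
/-- The internal-stability-augmented system is solved exactly by
`x = -1, y = 0, a ≤ -1, b ≤ 0` (the LoRA+ prescription). -/
theorem lora_plus_internal_stability (a b : EReal) (x y : ℝ) :
    (max b (y : EReal) + (x : EReal) + 1 = 0 ∧
     max a (x : EReal) + (y : EReal) + 1 = 0 ∧
     max a (x : EReal) + max b (y : EReal) + 1 = 0 ∧
     max a (x : EReal) + 1 = 0)
    ↔ (x = -1 ∧ y = 0 ∧ a ≤ ((-1 : ℝ) : EReal) ∧ b ≤ (0 : EReal)) := by
  constructor
  · rintro ⟨h1, h2, h3, h4⟩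
    have hAbot : max a (x : EReal) ≠ ⊥ := by
      intro h
      exact absurd (le_max_right a (x:EReal)) (by rw [h]; simp)
    have hAtop : max a (x : EReal) ≠ ⊤ := by
      intro h; rw [h, EReal.top_add_of_ne_bot (by rw [← EReal.coe_one]; exact EReal.coe_ne_bot 1)] at h4
      exact EReal.top_ne_zero h4
    have hBbot : max b (y : EReal) ≠ ⊥ := by
      intro h
      exact absurd (le_max_right b (y:EReal)) (by rw [h]; simp)
    have hBtop : max b (y : EReal) ≠ ⊤ := by
      intro h
      rw [h, EReal.top_add_of_ne_bot (EReal.coe_ne_bot x),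
        EReal.top_add_of_ne_bot (by rw [← EReal.coe_one]; exact EReal.coe_ne_bot 1)] at h1
      exact EReal.top_ne_zero h1
    set p := (max a (x : EReal)).toReal with hpdef
    set m := (max b (y : EReal)).toReal with hmdef
    have hp : ((p : EReal)) = max a (x : EReal) := EReal.coe_toReal hAtop hAbot
    have hm : ((m : EReal)) = max b (y : EReal) := EReal.coe_toReal hBtop hBbot
    rw [← hm] at h1
    rw [← hp] at h2 h4
    rw [← hp, ← hm] at h3
    have e1 : m + x + 1 = 0 := by exact_mod_cast h1
    have e2 : p + y + 1 = 0 := by exact_mod_cast h2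
    have e3 : p + m + 1 = 0 := by exact_mod_cast h3
    have e4 : p + 1 = 0 := by exact_mod_cast h4
    have hpv : p = -1 := by linarith
    have hyv : y = 0 := by linarith
    have hmv : m = 0 := by linarith
    have hxv : x = -1 := by linarith
    refine ⟨hxv, hyv, ?_, ?_⟩
    · have := le_max_left a (x : EReal)
      rw [← hp, hpv] at this
      exact_mod_cast this
    · have := le_max_left b (y : EReal)
      rw [← hm, hmv] at this
      exact_mod_cast this
  · rintro ⟨hx, hy, ha, hb⟩
    subst hx; subst hy
    have hax : max a ((-1:ℝ) : EReal) = ((-1:ℝ):EReal) := max_eq_right ha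
    have hby : max b ((0:ℝ) : EReal) = ((0:ℝ):EReal) := max_eq_right hb
    rw [hax, hby]
    refine ⟨?_, ?_, ?_, ?_⟩ <;> · norm_cast
end
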